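/- Let (Z,ν) be a probability space and (A_n)_{n∈ℕ} a sequence of measurable subsets of Z such that there exists a constant c > 0 with ν(A_n ∩ A_m) ≤ c·ν(A_n)·ν(A_m) for all distinct integers n, m. Let A_∞ = ⋂_{n∈ℕ} ⋃_{k≥n} A_k. Then ν(A_∞) > 0 if and only if the series ∑_{n=0}^∞ ν(A_n) diverges. -/

import Mathlib

open MeasureTheory Filter Set

-- auxiliary: tail sums of a divergent ENNReal series can be made ≥ 1
lemma tail_partial_sum_ge {f : ℕ → ENNReal} (hfin : ∀ n, f n ≠ ⊤)
    (htop : (∑' n, f n) = ⊤) (M : ℕ) :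
    ∃ N, M ≤ N ∧ 1 ≤ ∑ n ∈ Finset.Ico M N, f n := by
  have hM : ∑ n ∈ Finset.range M, f n ≠ ⊤ := by
    exact (ENNReal.sum_lt_top.mpr fun n _ => lt_top_iff_ne_top.mpr (hfin n)).ne
  have h1 : (∑ n ∈ Finset.range M, f n) + 1 < ⊤ := by
    exact ENNReal.add_lt_top.mpr ⟨lt_top_iff_ne_top.mpr hM, ENNReal.one_lt_top⟩
  rw [ENNReal.tsum_eq_iSup_sum] at htop
  obtain ⟨s, hs⟩ := lt_iSup_iff.mp (htop ▸ h1)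
  obtain ⟨N₀, hN₀⟩ := s.exists_nat_subset_range
  set N := max M N₀ with hN
  refine ⟨N, le_max_left _ _, ?_⟩
  have hsub : s ⊆ Finset.range N := hN₀.trans (Finset.range_subset_range.mpr (le_max_right _ _))
  have hle : (∑ n ∈ Finset.range M, f n) + 1 ≤ ∑ n ∈ Finset.range N, f n :=
    (hs.le).trans (Finset.sum_le_sum_of_subset hsub)
  have hsplit : ∑ n ∈ Finset.range N, f n
      = (∑ n ∈ Finset.range M, f n) + ∑ n ∈ Finset.Ico M N, f n := by
    rw [Finset.range_eq_Ico, Finset.range_eq_Ico]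
    exact (Finset.sum_Ico_consecutive f (Nat.zero_le M) (le_max_left M N₀)).symm
  rw [hsplit] at hle
  exact (ENNReal.add_le_add_iff_left hM).mp hle

-- Chung–Erdős inequality step: if the partial sum over F is ≥ 1, the union has measure
-- at least (1 + c')⁻¹.
lemma chung_erdos_step {Z : Type*} [MeasurableSpace Z] (ν : Measure Z) [IsProbabilityMeasure ν]
    (A : ℕ → Set Z) (hA : ∀ n, MeasurableSet (A n)) (c' : ENNReal) (hc' : c' ≠ ⊤)
    (hquasi : ∀ n m : ℕ, n ≠ m → ν (A n ∩ A m) ≤ c' * ν (A n) * ν (A m))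
    (F : Finset ℕ) (hS : 1 ≤ ∑ n ∈ F, ν (A n)) :
    (1 + c')⁻¹ ≤ ν (⋃ n ∈ F, A n) := by
  classical
  set S := ∑ n ∈ F, ν (A n) with hSdef
  set U : Set Z := ⋃ n ∈ F, A n with hU
  have hUm : MeasurableSet U := MeasurableSet.biUnion F.countable_toSet (fun n _ => hA n)
  set f : Z → ENNReal := fun z => ∑ n ∈ F, (A n).indicator 1 z with hf
  have hfm : Measurable f := by
    apply Finset.measurable_sum
    exact fun n _ => (measurable_one.indicator (hA n))
  set g : Z → ENNReal := U.indicator 1 with hg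
  have hgm : Measurable g := measurable_one.indicator hUm
  -- f vanishes off U, so f = f * g
  have hfg : ∀ z, f z = (f * g) z := by
    intro z
    by_cases hz : z ∈ U
    · simp [hg, hz, Set.indicator_of_mem]
    · have : f z = 0 := by
        apply Finset.sum_eq_zero
        intro n hn
        apply Set.indicator_of_notMem
        exact fun h => hz (Set.mem_biUnion hn h)
      simp [this]
  -- ∫ f = S
  have hint_f : ∫⁻ z, f z ∂ν = S := by
    rw [hf, lintegral_finset_sum _ (fun n _ => measurable_one.indicator (hA n))]
    simp [lintegral_indicator, hA]; rfl
  -- ∫ f² = ∑∑ ν (A n ∩ A m)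
  have hind : ∀ n m : ℕ, ∀ z : Z,
      (A n).indicator (1 : Z → ENNReal) z * (A m).indicator 1 z
        = (A n ∩ A m).indicator 1 z := by
    intro n m z
    by_cases h1 : z ∈ A n <;> by_cases h2 : z ∈ A m <;>
      simp [Set.indicator_of_mem, Set.indicator_of_notMem, h1, h2, Set.mem_inter_iff]
  have hint_f2 : ∫⁻ z, f z ^ (2:ℝ) ∂ν = ∑ n ∈ F, ∑ m ∈ F, ν (A n ∩ A m) := by
    have : ∀ z, f z ^ (2:ℝ) = ∑ n ∈ F, ∑ m ∈ F, (A n ∩ A m).indicator 1 z := by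
      intro z
      rw [show ((2:ℝ)) = ((2:ℕ):ℝ) by norm_num, ENNReal.rpow_natCast]
      rw [sq, hf, Finset.sum_mul_sum]
      exact Finset.sum_congr rfl fun n _ => Finset.sum_congr rfl fun m _ => hind n m z
    simp_rw [this]
    rw [lintegral_finset_sum _ (fun n _ => Finset.measurable_sum _
      (fun m _ => measurable_one.indicator ((hA n).inter (hA m))))]
    refine Finset.sum_congr rfl fun n _ => ?_
    rw [lintegral_finset_sum _ (fun m _ => measurable_one.indicator ((hA n).inter (hA m)))]
    refine Finset.sum_congr rfl fun m _ => ?_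
    simp [lintegral_indicator, (hA n).inter (hA m)]
  -- bound on ∫ f²
  have hS_fin : S ≠ ⊤ := by
    exact (ENNReal.sum_lt_top.mpr fun n _ => measure_lt_top ν (A n)).ne
  have hbound : ∑ n ∈ F, ∑ m ∈ F, ν (A n ∩ A m) ≤ (1 + c') * S ^ (2:ℕ) := by
    have hsplit : ∀ n ∈ F, ∑ m ∈ F, ν (A n ∩ A m)
        ≤ ν (A n) + ∑ m ∈ F, c' * ν (A n) * ν (A m) := by
      intro n hn
      rw [← Finset.add_sum_erase _ _ hn]
      refine add_le_add (measure_mono Set.inter_subset_left) ?_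
      calc ∑ m ∈ F.erase n, ν (A n ∩ A m)
          ≤ ∑ m ∈ F.erase n, c' * ν (A n) * ν (A m) := by
            refine Finset.sum_le_sum fun m hm => ?_
            exact hquasi n m (fun h => (Finset.mem_erase.mp hm).1 h.symm)
        _ ≤ ∑ m ∈ F, c' * ν (A n) * ν (A m) :=
            Finset.sum_le_sum_of_subset (Finset.erase_subset _ _)
    calc ∑ n ∈ F, ∑ m ∈ F, ν (A n ∩ A m)
        ≤ ∑ n ∈ F, (ν (A n) + ∑ m ∈ F, c' * ν (A n) * ν (A m)) :=
          Finset.sum_le_sum hsplit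
      _ = S + c' * S * S := by
          rw [Finset.sum_add_distrib]
          congr 1
          calc ∑ n ∈ F, ∑ m ∈ F, c' * ν (A n) * ν (A m)
              = ∑ n ∈ F, c' * ν (A n) * S := by
                exact Finset.sum_congr rfl fun n _ => (Finset.mul_sum _ _ _).symm
            _ = (∑ n ∈ F, c' * ν (A n)) * S := by rw [← Finset.sum_mul]
            _ = c' * S * S := by rw [← Finset.mul_sum]
      _ ≤ S * S + c' * (S * S) := by
          have h1 : S ≤ S * S := le_mul_of_one_le_left zero_le hS
          exact add_le_add h1 (mul_assoc c' S S).le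
      _ = (1 + c') * S ^ (2:ℕ) := by ring
  -- Cauchy–Schwarz
  have hCS : S ≤ (∫⁻ z, f z ^ (2:ℝ) ∂ν) ^ ((1:ℝ)/2) * (ν U) ^ ((1:ℝ)/2) := by
    have h2 : Real.HolderConjugate 2 2 := Real.HolderConjugate.two_two
    have := ENNReal.lintegral_mul_le_Lp_mul_Lq ν h2 hfm.aemeasurable hgm.aemeasurable
    have hgg : ∫⁻ z, g z ^ (2:ℝ) ∂ν = ν U := by
      have : ∀ z, g z ^ (2:ℝ) = U.indicator 1 z := by
        intro z
        by_cases hz : z ∈ U <;>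
          simp [hg, Set.indicator_of_mem, Set.indicator_of_notMem, hz,
            ENNReal.rpow_natCast, ENNReal.zero_rpow_of_pos]
      simp_rw [this]
      simp [lintegral_indicator, hUm]
    calc S = ∫⁻ z, f z ∂ν := hint_f.symm
      _ = ∫⁻ z, (f * g) z ∂ν := lintegral_congr hfg
      _ ≤ (∫⁻ z, f z ^ (2:ℝ) ∂ν) ^ ((1:ℝ)/2) * (∫⁻ z, g z ^ (2:ℝ) ∂ν) ^ ((1:ℝ)/2) := this
      _ = _ := by rw [hgg]
  -- square both sides
  have hsq : S ^ (2:ℕ) ≤ (1 + c') * S ^ (2:ℕ) * ν U := by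
    have := pow_le_pow_left' hCS 2
    rw [mul_pow] at this
    have hrw : ∀ x : ENNReal, (x ^ ((1:ℝ)/2)) ^ (2:ℕ) = x := by
      intro x
      rw [← ENNReal.rpow_natCast (x ^ ((1:ℝ)/2)) 2, ← ENNReal.rpow_mul]
      norm_num
    rw [hrw, hrw] at this
    calc S ^ (2:ℕ) ≤ (∫⁻ z, f z ^ (2:ℝ) ∂ν) * ν U := this
      _ ≤ (1 + c') * S ^ (2:ℕ) * ν U := by gcongr; rw [hint_f2]; exact hbound
  -- conclude
  have hS2_ne_zero : S ^ (2:ℕ) ≠ 0 := by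
    have : (0:ENNReal) < S := lt_of_lt_of_le one_pos hS
    positivity
  have hS2_ne_top : S ^ (2:ℕ) ≠ ⊤ := by
    exact ENNReal.pow_ne_top hS_fin
  rw [ENNReal.inv_le_iff_le_mul (by simp) (by simp [hc'])]
  calc (1:ENNReal) = S ^ (2:ℕ) * (S ^ (2:ℕ))⁻¹ := by
        rw [ENNReal.mul_inv_cancel hS2_ne_zero hS2_ne_top]
    _ ≤ ((1 + c') * S ^ (2:ℕ) * ν U) * (S ^ (2:ℕ))⁻¹ := by gcongr
    _ = ν U * (1 + c') * (S ^ (2:ℕ) * (S ^ (2:ℕ))⁻¹) := by ring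
    _ = ν U * (1 + c') := by rw [ENNReal.mul_inv_cancel hS2_ne_zero hS2_ne_top, mul_one]
    _ = (1 + c') * ν U := mul_comm _ _

/-- Quasi-independent Borel–Cantelli lemma: for a probability space `(Z, ν)` and measurable
sets `A n` with `ν (A n ∩ A m) ≤ c · ν (A n) · ν (A m)` for all distinct `n, m` (with `c > 0`
a constant), the set `A_∞` of points belonging to infinitely many `A n` has positive measure
if and only if `∑ ν (A n)` diverges. -/
theorem quasi_independent_borel_cantelli
    {Z : Type*} [MeasurableSpace Z] (ν : Measure Z) [IsProbabilityMeasure ν]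
    (A : ℕ → Set Z) (hA : ∀ n, MeasurableSet (A n))
    (c : ℝ) (hc : 0 < c)
    (hquasi : ∀ n m : ℕ, n ≠ m →
      ν (A n ∩ A m) ≤ ENNReal.ofReal c * ν (A n) * ν (A m)) :
    0 < ν (⋂ n : ℕ, ⋃ k : ℕ, ⋃ _ : n ≤ k, A k) ↔ (∑' n : ℕ, ν (A n)) = ⊤ := by
  have hlimsup : limsup A atTop = ⋂ n : ℕ, ⋃ k : ℕ, ⋃ _ : n ≤ k, A k := by
    rw [limsup_eq_iInf_iSup_of_nat]
    simp only [ge_iff_le, Set.iInf_eq_iInter, Set.iSup_eq_iUnion]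
  constructor
  · intro hpos
    by_contra htop
    have h0 := measure_limsup_atTop_eq_zero (μ := ν) (s := A) htop
    rw [hlimsup] at h0
    exact hpos.ne' h0
  · intro htop
    set c' := ENNReal.ofReal c with hc'def
    have hc'top : c' ≠ ⊤ := ENNReal.ofReal_ne_top
    have key : ∀ M : ℕ, (1 + c')⁻¹ ≤ ν (⋃ k, ⋃ _ : M ≤ k, A k) := by
      intro M
      obtain ⟨N, hMN, hS⟩ :=
        tail_partial_sum_ge (fun n => (measure_lt_top ν (A n)).ne) htop M
      refine le_trans
        (chung_erdos_step ν A hA c' hc'top hquasi (Finset.Ico M N) hS)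
        (measure_mono ?_)
      intro z hz
      simp only [Set.mem_iUnion, Finset.mem_coe, Finset.mem_Ico] at hz ⊢
      obtain ⟨n, ⟨hMn, _⟩, hzn⟩ := hz
      exact ⟨n, hMn, hzn⟩
    have hanti : Antitone (fun M : ℕ => ⋃ k, ⋃ _ : M ≤ k, A k) := by
      intro a b hab
      exact Set.iUnion₂_subset fun k hk =>
        Set.subset_iUnion₂ (s := fun k _ => A k) k (hab.trans hk)
    have hEq : ν (⋂ M : ℕ, ⋃ k, ⋃ _ : M ≤ k, A k)
        = ⨅ M : ℕ, ν (⋃ k, ⋃ _ : M ≤ k, A k) := by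
      refine Directed.measure_iInter (fun M => ?_) (hanti.directed_ge) ⟨0, ?_⟩
      · exact (MeasurableSet.iUnion fun k => MeasurableSet.iUnion fun _ => hA k).nullMeasurableSet
      · exact (measure_lt_top ν _).ne
    have hle : (1 + c')⁻¹ ≤ ν (⋂ M : ℕ, ⋃ k, ⋃ _ : M ≤ k, A k) := by
      rw [hEq]; exact le_iInf key
    refine lt_of_lt_of_le ?_ hle
    exact ENNReal.inv_pos.mpr (by simp [hc'top])
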